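/- Let R be a commutative ring and (θ₁, θ₂) a regular sequence in R. Then the element η = θ₁·z₁ + θ₂·z₂ of the polynomial ring R[z₁, z₂] is a nonzerodivisor. -/

import Mathlib

open MvPolynomial

lemma C_mem_nonZeroDivisors_mv {R : Type*} [CommRing R] {σ : Type*} {a : R}
    (ha : a ∈ nonZeroDivisors R) :
    (C a : MvPolynomial σ R) ∈ nonZeroDivisors (MvPolynomial σ R) := by
  rw [mem_nonZeroDivisors_iff_right]
  intro p hp
  ext m
  have := congrArg (fun q => MvPolynomial.coeff m q) hp
  rw [mul_comm] at this
  simp only [MvPolynomial.coeff_C_mul, MvPolynomial.coeff_zero] at this ⊢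
  exact (mem_nonZeroDivisors_iff_right.mp ha) _ (by rwa [mul_comm] at this)

/-- If `(θ₁, θ₂)` is a regular sequence in a commutative ring `R` (i.e. `θ₁` is a
nonzerodivisor on `R` and `θ₂` is a nonzerodivisor on `R/(θ₁)`), then
`η = θ₁·z₁ + θ₂·z₂` is a nonzerodivisor in the polynomial ring `R[z₁, z₂]`. -/
theorem stmt5 (R : Type*) [CommRing R] (θ₁ θ₂ : R)
    (h1 : θ₁ ∈ nonZeroDivisors R)
    (h2 : Ideal.Quotient.mk (Ideal.span {θ₁}) θ₂ ∈
      nonZeroDivisors (R ⧸ Ideal.span {θ₁})) :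
    (C θ₁ * X 0 + C θ₂ * X 1 : MvPolynomial (Fin 2) R) ∈
      nonZeroDivisors (MvPolynomial (Fin 2) R) := by
  classical
  rcases subsingleton_or_nontrivial R with hR | hR
  · rw [mem_nonZeroDivisors_iff_right]; intro p _; exact Subsingleton.elim _ _
  set e := MvPolynomial.finSuccEquiv R 1
  have heta : e (C θ₁ * X 0 + C θ₂ * X 1) =
      Polynomial.C (C θ₁) * Polynomial.X + Polynomial.C (C θ₂ * X 0) := by
    have h0 : (0 : Fin 2) = (0 : Fin 1).succ → False := by decide
    have : (1 : Fin 2) = (0 : Fin 1).succ := by decide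
    rw [map_add, map_mul, map_mul, finSuccEquiv_X_zero, this, finSuccEquiv_X_succ]
    simp [e, finSuccEquiv_apply, map_mul]
  have hC1 : (C θ₁ : MvPolynomial (Fin 1) R) ≠ 0 := fun h => by
    have := MvPolynomial.C_injective (Fin 1) R (h.trans (map_zero C).symm)
    exact nonZeroDivisors.ne_zero h1 this
  have hlead : (Polynomial.C (C θ₁ : MvPolynomial (Fin 1) R) * Polynomial.X +
      Polynomial.C (C θ₂ * X 0)).leadingCoeff = C θ₁ :=
    Polynomial.leadingCoeff_linear hC1
  have hnzd : (Polynomial.C (C θ₁ : MvPolynomial (Fin 1) R) * Polynomial.X +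
      Polynomial.C (C θ₂ * X 0)) ∈
      nonZeroDivisors (Polynomial (MvPolynomial (Fin 1) R)) := by
    apply Polynomial.mem_nonZeroDivisors_of_leadingCoeff
    rw [hlead]
    exact C_mem_nonZeroDivisors_mv h1
  rw [mem_nonZeroDivisors_iff_right]
  intro p hp
  have : e p * (Polynomial.C (C θ₁) * Polynomial.X + Polynomial.C (C θ₂ * X 0)) = 0 := by
    rw [← heta, ← map_mul, hp, map_zero]
  have := (mem_nonZeroDivisors_iff_right.mp hnzd) _ this
  exact e.injective (by rw [this, map_zero])
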